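/- Let p be a prime, let G be an additive subgroup of ℝ, let ε > 0, and let M := {0} ∪ {g ∈ G : g ≥ ε}, a submonoid of (ℝ, +). Then the monoid algebra 𝔽_p[M] over the field with p elements is hereditarily atomic: 𝔽_p[M] is an integral domain and every subring of 𝔽_p[M] is atomic. -/

import Mathlib

/-- A commutative ring (intended: an integral domain) is atomic if every nonzero nonunit
is a finite product of irreducible elements. -/
def AtomicDomain (A : Type*) [CommRing A] : Prop :=
  ∀ a : A, a ≠ 0 → ¬ IsUnit a → ∃ l : Multiset A, (∀ x ∈ l, Irreducible x) ∧ l.prod = a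

/-- A commutative ring satisfies the ACCP if every ascending chain of principal ideals
stabilizes. -/
def RingACCP (A : Type*) [CommRing A] : Prop :=
  ∀ f : ℕ → A, (∀ n, Ideal.span {f n} ≤ Ideal.span {f (n + 1)}) →
    ∃ N, ∀ n, N ≤ n → Ideal.span {f n} = Ideal.span {f N}

/-- Let `p` be a prime, `G` an additive subgroup of `ℝ`, `ε > 0`, and `M`
the submonoid `{0} ∪ {g ∈ G : g ≥ ε}` of `(ℝ, +)`. Then the monoid algebra `𝔽_p[M]` is a
hereditarily atomic integral domain: it is a domain and every subring of it is atomic. -/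
theorem truncated_monoid_algebra_hereditarily_atomic (p : ℕ) (hp : p.Prime)
    (G : AddSubgroup ℝ) (ε : ℝ) (hε : 0 < ε) (M : AddSubmonoid ℝ)
    (hM : (M : Set ℝ) = ({0} : Set ℝ) ∪ {g : ℝ | g ∈ G ∧ ε ≤ g}) :
    IsDomain (AddMonoidAlgebra (ZMod p) M) ∧
      ∀ S : Subring (AddMonoidAlgebra (ZMod p) M), AtomicDomain S := by
  haveI : Fact p.Prime := ⟨hp⟩
  haveI : NeZero p := ⟨hp.pos.ne'⟩
  haveI hUS : UniqueSums M :=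
    UniqueSums.of_injective_addHom (M.subtype).toAddHom Subtype.coe_injective inferInstance
  haveI hdom : IsDomain (AddMonoidAlgebra (ZMod p) M) := NoZeroDivisors.to_isDomain _
  -- membership facts
  have hmem : ∀ m : M, (m : ℝ) = 0 ∨ ε ≤ (m : ℝ) := by
    intro m
    have h2 : (m : ℝ) ∈ (M : Set ℝ) := m.2
    rw [hM] at h2
    rcases h2 with h | h
    · exact Or.inl h
    · exact Or.inr h.2
  have hnn : ∀ m : M, (0 : ℝ) ≤ (m : ℝ) := by
    intro m
    rcases hmem m with h | h
    · exact h.ge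
    · linarith
  set D : M → NNReal := fun m => ⟨(m : ℝ), hnn m⟩ with hDdef
  have hD : Function.Injective D := by
    intro a b h
    have h2 : ((D a : NNReal) : ℝ) = ((D b : NNReal) : ℝ) := congrArg _ h
    exact Subtype.ext h2
  have hadd : ∀ a b : M, D (a + b) = D a + D b := by
    intro a b
    apply NNReal.coe_injective
    simp [hDdef]
    rfl
  have hdm : ∀ f g : AddMonoidAlgebra (ZMod p) M, f ≠ 0 → g ≠ 0 →
      (f * g).supDegree D = f.supDegree D + g.supDegree D := by
    intro f g hf hg
    exact AddMonoidAlgebra.supDegree_mul hD hadd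
      (mul_ne_zero ((AddMonoidAlgebra.leadingCoeff_ne_zero hD).mpr hf)
        ((AddMonoidAlgebra.leadingCoeff_ne_zero hD).mpr hg)) hf hg
  have hD0 : D 0 = 0 := by
    apply NNReal.coe_injective
    simp [hDdef]
    rfl
  have hdeg1 : (1 : AddMonoidAlgebra (ZMod p) M).supDegree D = 0 := by
    rw [AddMonoidAlgebra.one_def, AddMonoidAlgebra.supDegree_single_ne_zero _ one_ne_zero, hD0]
  -- constants are units
  have hconst : ∀ c : ZMod p, c ≠ 0 → IsUnit (AddMonoidAlgebra.single (0 : M) c) := by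
    intro c hc
    refine IsUnit.of_mul_eq_one (AddMonoidAlgebra.single 0 c⁻¹) ?_
    rw [AddMonoidAlgebra.single_mul_single, add_zero, mul_inv_cancel₀ hc,
      ← AddMonoidAlgebra.one_def]
  -- any nonzero nonunit has supDegree at least ε
  have hdegε : ∀ a : AddMonoidAlgebra (ZMod p) M, a ≠ 0 → ¬ IsUnit a →
      (⟨ε, hε.le⟩ : NNReal) ≤ a.supDegree D := by
    intro a ha hu
    have hex : ∃ m ∈ a.coeff.support, m ≠ (0 : M) := by
      by_contra h
      push_neg at h
      have hs : a.coeff.support ⊆ {0} := by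
        intro m hm
        simpa using h m hm
      have ha0 : a = AddMonoidAlgebra.single 0 (a.coeff 0) :=
        congrArg AddMonoidAlgebra.ofCoeff (Finsupp.support_subset_singleton.mp hs)
      have : a.coeff 0 ≠ 0 := by
        intro h0
        apply ha
        rw [ha0, h0, AddMonoidAlgebra.single_zero]
      exact hu (ha0 ▸ hconst _ this)
    obtain ⟨m, hm, hm0⟩ := hex
    have hεm : ε ≤ (m : ℝ) := by
      rcases hmem m with h | h
      · exact absurd (Subtype.ext h) hm0
      · exact h
    have h1 : (⟨ε, hε.le⟩ : NNReal) ≤ D m := hεm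
    exact h1.trans (Finset.le_sup (α := NNReal) (f := D) hm)
  -- units of the big algebra restrict to units of any subring
  have hunitS : ∀ (S : Subring (AddMonoidAlgebra (ZMod p) M)) (u : S),
      IsUnit (u : AddMonoidAlgebra (ZMod p) M) → IsUnit u := by
    intro S u hu
    rcases hu.exists_right_inv with ⟨v, huv⟩
    have hu0 : (u : AddMonoidAlgebra (ZMod p) M) ≠ 0 := by
      intro h
      rw [h, zero_mul] at huv
      exact one_ne_zero huv.symm
    have hv0 : v ≠ 0 := by
      intro h
      rw [h, mul_zero] at huv
      exact one_ne_zero huv.symm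
    have hsum : (u : AddMonoidAlgebra (ZMod p) M).supDegree D + v.supDegree D = 0 := by
      rw [← hdm _ _ hu0 hv0, huv, hdeg1]
    have hdv : v.supDegree D = 0 := (add_eq_zero.mp hsum).2
    have hsv : v.coeff.support ⊆ {0} := by
      intro m hm
      have hle : D m ≤ v.supDegree D := Finset.le_sup hm
      rw [hdv, le_zero_iff] at hle
      have : (m : ℝ) = 0 := congrArg Subtype.val hle
      simpa using Subtype.ext this
    have hv : v = AddMonoidAlgebra.single 0 (v.coeff 0) :=
        congrArg AddMonoidAlgebra.ofCoeff (Finsupp.support_subset_singleton.mp hsv)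
    have hvS : v ∈ S := by
      rw [hv]
      have h1 : AddMonoidAlgebra.single (0 : M) (((v.coeff 0).val : ℕ) : ZMod p)
          = (((v.coeff 0).val : ℕ) : AddMonoidAlgebra (ZMod p) M) :=
        map_natCast (AddMonoidAlgebra.singleZeroRingHom) _
      rw [ZMod.natCast_rightInverse (v.coeff 0)] at h1
      rw [h1]
      exact natCast_mem S _
    exact IsUnit.of_mul_eq_one ⟨v, hvS⟩ (Subtype.ext huv)
  refine ⟨hdom, ?_⟩
  set dr : AddMonoidAlgebra (ZMod p) M → ℝ :=
    fun f => ((f.supDegree D : NNReal) : ℝ) with hdrdef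
  have hdr0 : ∀ x, (0 : ℝ) ≤ dr x := fun x => (x.supDegree D).2
  have hdrε : ∀ a : AddMonoidAlgebra (ZMod p) M, a ≠ 0 → ¬ IsUnit a → ε ≤ dr a := by
    intro a ha hu
    exact NNReal.coe_le_coe.mpr (hdegε a ha hu)
  have hdrm : ∀ f g : AddMonoidAlgebra (ZMod p) M, f ≠ 0 → g ≠ 0 →
      dr (f * g) = dr f + dr g := by
    intro f g hf hg
    rw [hdrdef]
    simp only
    rw [hdm f g hf hg]
    exact NNReal.coe_add _ _
  intro S
  set μ : AddMonoidAlgebra (ZMod p) M → ℕ := fun x => ⌊dr x / ε⌋₊ with hμdef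
  have hμ1 : ∀ a : AddMonoidAlgebra (ZMod p) M, a ≠ 0 → ¬ IsUnit a → 1 ≤ μ a := by
    intro a ha hu
    have : (1 : ℝ) ≤ dr a / ε := (one_le_div hε).mpr (hdrε a ha hu)
    exact Nat.le_floor (by exact_mod_cast this)
  have main : ∀ (n : ℕ) (a : S), μ (a : AddMonoidAlgebra (ZMod p) M) ≤ n →
      (a : AddMonoidAlgebra (ZMod p) M) ≠ 0 → ¬ IsUnit a →
      ∃ l : Multiset S, (∀ x ∈ l, Irreducible x) ∧ l.prod = a := by
    intro n
    induction n with
    | zero =>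
      intro a hdeg ha hu
      have huA : ¬ IsUnit (a : AddMonoidAlgebra (ZMod p) M) := fun h => hu (hunitS S a h)
      have := hμ1 _ ha huA
      omega
    | succ n ih =>
      intro a hdeg ha hu
      by_cases hirr : Irreducible a
      · exact ⟨{a}, by simpa using hirr, by simp⟩
      · rw [irreducible_iff, not_and_or] at hirr
        rcases hirr with h | h
        · exact absurd (not_not.mp h) hu
        · push_neg at h
          obtain ⟨b, c, habc, hb, hc⟩ := h
          have habcA : (a : AddMonoidAlgebra (ZMod p) M)
              = (b : AddMonoidAlgebra (ZMod p) M) * c := by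
            exact_mod_cast congrArg (Subtype.val) habc
          have hb0 : (b : AddMonoidAlgebra (ZMod p) M) ≠ 0 := by
            intro h0
            apply ha
            rw [habcA, h0, zero_mul]
          have hc0 : (c : AddMonoidAlgebra (ZMod p) M) ≠ 0 := by
            intro h0
            apply ha
            rw [habcA, h0, mul_zero]
          have hbA : ¬ IsUnit (b : AddMonoidAlgebra (ZMod p) M) := fun h => hb (hunitS S b h)
          have hcA : ¬ IsUnit (c : AddMonoidAlgebra (ZMod p) M) := fun h => hc (hunitS S c h)
          have hsum : dr (a : AddMonoidAlgebra (ZMod p) M)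
              = dr (b : AddMonoidAlgebra (ZMod p) M) + dr (c : AddMonoidAlgebra (ZMod p) M) := by
            rw [habcA]
            exact hdrm _ _ hb0 hc0
          have key : ∀ x y : AddMonoidAlgebra (ZMod p) M,
              dr (a : AddMonoidAlgebra (ZMod p) M) = dr x + dr y →
              y ≠ 0 → ¬ IsUnit y → μ x ≤ n := by
            intro x y hxy hy0 hyu
            have hεy : ε ≤ dr y := hdrε y hy0 hyu
            have hdiv : dr x / ε + 1 ≤ dr (a : AddMonoidAlgebra (ZMod p) M) / ε := by
              rw [div_add' _ _ _ hε.ne']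
              gcongr
              linarith
            have hfl : μ x + 1 ≤ μ (a : AddMonoidAlgebra (ZMod p) M) := by
              have h1 : (0 : ℝ) ≤ dr x / ε := div_nonneg (hdr0 x) hε.le
              calc μ x + 1 = ⌊dr x / ε + 1⌋₊ := by
                    rw [hμdef]; exact (Nat.floor_add_one h1).symm
                _ ≤ μ (a : AddMonoidAlgebra (ZMod p) M) := Nat.floor_le_floor hdiv
            omega
          obtain ⟨lb, hlb, hlbp⟩ := ih b (key _ _ hsum hc0 hcA) hb0 hb
          obtain ⟨lc, hlc, hlcp⟩ := ih c (key _ _ (by rw [hsum]; ring) hb0 hbA) hc0 hc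
          refine ⟨lb + lc, ?_, ?_⟩
          · intro x hx
            rcases Multiset.mem_add.mp hx with h | h
            · exact hlb x h
            · exact hlc x h
          · rw [Multiset.prod_add, hlbp, hlcp, habc]
  intro a ha hu
  have ha' : (a : AddMonoidAlgebra (ZMod p) M) ≠ 0 := fun h => ha (Subtype.ext h)
  exact main (μ (a : AddMonoidAlgebra (ZMod p) M)) a le_rfl ha' hu
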